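/- arXiv:1307.3822 — 2 statements merged into one kernel-verified Lean document; each statement's English description precedes it below -/
import Mathlib

section
/- Let T be a tree of minimum total edge weight among all trees in a metric graph G that span R and have every vertex of R internal. Then there exists such an optimal tree T* in which every leaf of T* is adjacent to a vertex of R. -/
open SimpleGraph
open scoped Classical

variable {V : Type*}

noncomputable def subDegree [Fintype V] {G : SimpleGraph V} (H : G.Subgraph) (v : V) : ℕ :=
  (Finset.univ.filter fun u => H.Adj v u).card

noncomputable def subWeight [Fintype V] {G : SimpleGraph V} (w : V → V → ℝ) (H : G.Subgraph) : ℝ :=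
  (∑ u, ∑ v, if H.Adj u v then w u v else 0) / 2

def IsTreeSub {G : SimpleGraph V} (H : G.Subgraph) : Prop := H.coe.IsTree

def IsMetric (w : V → V → ℝ) : Prop :=
  (∀ a b, 0 ≤ w a b) ∧ (∀ a b, w a b = w b a) ∧ (∀ a b c, w a c ≤ w a b + w b c)

def IsInternalSteiner [Fintype V] {G : SimpleGraph V} (R : Set V) (H : G.Subgraph) : Prop :=
  IsTreeSub H ∧ R ⊆ H.verts ∧ ∀ v ∈ R, 2 ≤ subDegree H v

/-- An interior vertex of a path has two distinct neighbors. -/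
lemma interior_two_nbrs {W : Type*} {G : SimpleGraph W} {a b : W} (p : G.Walk a b) :
    p.IsPath → ∀ x, x ∈ p.support → x ≠ a → x ≠ b →
      ∃ c d, c ≠ d ∧ G.Adj x c ∧ G.Adj x d := by
  induction p with
  | nil =>
    intro _ x hx hxa _
    simp only [SimpleGraph.Walk.support_nil, List.mem_singleton] at hx
    exact absurd hx hxa
  | @cons u c b h q ih =>
    intro hp x hx hxa hxb
    rw [SimpleGraph.Walk.support_cons, List.mem_cons] at hx
    rcases hx with rfl | hx
    · exact absurd rfl hxa
    by_cases hxc : x = c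
    · subst hxc
      cases q with
      | nil => exact absurd rfl hxb
      | @cons _ d _ h2 q2 =>
        refine ⟨u, d, ?_, h.symm, h2⟩
        rw [SimpleGraph.Walk.cons_isPath_iff] at hp
        intro hud
        exact hp.2 (by
          rw [hud, SimpleGraph.Walk.support_cons, List.mem_cons]
          exact Or.inr (SimpleGraph.Walk.start_mem_support q2))
    · exact ih hp.of_cons x hx hxc hxb

section Del

variable [Fintype V] {T : (⊤ : SimpleGraph V).Subgraph} {v : V}

/-- walks avoiding `v` give reachability in the deleted subgraph -/
lemma reach_del {a b : T.verts} (p : T.coe.Walk a b)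
    (hav : ∀ z ∈ p.support, (z : V) ≠ v) :
    ∀ (ha : (a : V) ∈ (T.deleteVerts {v}).verts) (hb : (b : V) ∈ (T.deleteVerts {v}).verts),
      (T.deleteVerts {v}).coe.Reachable ⟨a, ha⟩ ⟨b, hb⟩ := by
  induction p with
  | nil => intro ha hb; exact SimpleGraph.Reachable.refl _
  | @cons a c b h q ih =>
    intro ha hb
    have hcv : (c : V) ≠ v := hav c (by simp)
    have hc : (c : V) ∈ (T.deleteVerts {v}).verts := by
      simp [SimpleGraph.Subgraph.deleteVerts_verts, c.2, hcv]
    have hadj : (T.deleteVerts {v}).coe.Adj ⟨a, ha⟩ ⟨c, hc⟩ := by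
      simp only [SimpleGraph.Subgraph.coe_adj, SimpleGraph.Subgraph.deleteVerts_adj]
      exact ⟨a.2, by simpa using hav a (by simp), c.2, by simpa using hcv, h⟩
    exact (hadj.reachable).trans
      (ih (fun z hz => hav z (by rw [SimpleGraph.Walk.support_cons]; exact List.mem_cons_of_mem _ hz)) hc hb)

lemma tree_del (hTree : T.coe.IsTree) (hv : v ∈ T.verts) (hdeg : subDegree T v = 1) :
    (T.deleteVerts {v}).coe.IsTree := by
  -- the unique neighbor
  obtain ⟨u, hu⟩ := Finset.card_eq_one.mp hdeg
  have huadj : ∀ x, T.Adj v x ↔ x = u := by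
    intro x
    constructor
    · intro hx
      have : x ∈ Finset.univ.filter fun y => T.Adj v y := by simp [hx]
      rw [hu] at this; simpa using this
    · intro hx
      have : u ∈ Finset.univ.filter fun y => T.Adj v y := by rw [hu]; simp [hx]
      rw [hx]; simpa using this
  have huv : u ≠ v := fun h => (T.loopless.irrefl v (by rw [huadj]; exact h.symm)).elim
  have huT : u ∈ T.verts := ((huadj u).mpr rfl).snd_mem
  have huT' : u ∈ (T.deleteVerts {v}).verts := by
    simp [SimpleGraph.Subgraph.deleteVerts_verts, huT, huv]
  constructor
  · -- connected
    haveI : Nonempty ((T.deleteVerts {v}).verts) := ⟨⟨u, huT'⟩⟩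
    refine SimpleGraph.Connected.mk ?_
    rintro ⟨x, hx⟩ ⟨y, hy⟩
    obtain ⟨hx', hxv⟩ : x ∈ T.verts ∧ x ≠ v := by simpa using hx
    obtain ⟨hy', hyv⟩ : y ∈ T.verts ∧ y ≠ v := by simpa using hy
    obtain ⟨p⟩ := hTree.isConnected ⟨x, hx'⟩ ⟨y, hy'⟩
    have hav : ∀ z ∈ p.toPath.1.support, (z : V) ≠ v := by
      intro z hz hzv
      have hza : z ≠ (⟨x, hx'⟩ : T.verts) := by
        intro h; rw [h] at hzv; exact hxv hzv
      have hzb : z ≠ (⟨y, hy'⟩ : T.verts) := by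
        intro h; rw [h] at hzv; exact hyv hzv
      obtain ⟨c, d, hcd, hc, hd⟩ := interior_two_nbrs p.toPath.1 p.toPath.2 z hz hza hzb
      have hc' : T.Adj v (c : V) := by
        have := (SimpleGraph.Subgraph.coe_adj _ _ _).mp hc; rwa [hzv] at this
      have hd' : T.Adj v (d : V) := by
        have := (SimpleGraph.Subgraph.coe_adj _ _ _).mp hd; rwa [hzv] at this
      exact hcd (Subtype.ext (((huadj _).mp hc').trans ((huadj _).mp hd').symm))
    exact reach_del p.toPath.1 hav hx hy
  · -- acyclic
    intro x c hc
    exact hTree.IsAcyclic _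
      (hc.map (SimpleGraph.Subgraph.inclusion.injective (SimpleGraph.Subgraph.deleteVerts_le)))

lemma weight_del (w : V → V → ℝ) (hw : ∀ a b, 0 ≤ w a b) (s : Set V) :
    subWeight w (T.deleteVerts s) ≤ subWeight w T := by
  unfold subWeight
  rw [div_le_div_iff_of_pos_right (by norm_num : (0:ℝ) < 2)]
  refine Finset.sum_le_sum fun a _ => Finset.sum_le_sum fun b _ => ?_
  split_ifs with h1 h2 h2
  · exact le_refl _
  · exact absurd ((SimpleGraph.Subgraph.deleteVerts_le).2 h1) h2
  · exact hw a b
  · exact le_refl _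

lemma deg_del {x : V} (hx : x ≠ v) (hnadj : ¬ T.Adj v x) :
    subDegree (T.deleteVerts {v}) x = subDegree T x := by
  unfold subDegree
  congr 1
  ext y
  simp only [Finset.mem_filter, Finset.mem_univ, true_and]
  simp only [SimpleGraph.Subgraph.deleteVerts_adj, Set.mem_singleton_iff]
  constructor
  · rintro ⟨_, _, _, _, h⟩; exact h
  · intro h
    exact ⟨h.fst_mem, by simpa using hx, h.snd_mem,
      by simpa using (fun hy : y = v => hnadj (hy ▸ h).symm), h⟩

lemma main_aux (w : V → V → ℝ) (hm : IsMetric w) (R : Set V) :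
    ∀ (n : ℕ) (T : (⊤ : SimpleGraph V).Subgraph), T.verts.ncard ≤ n →
      IsInternalSteiner R T →
      (∀ T' : (⊤ : SimpleGraph V).Subgraph,
        IsInternalSteiner R T' → subWeight w T ≤ subWeight w T') →
      ∃ Tstar : (⊤ : SimpleGraph V).Subgraph, IsInternalSteiner R Tstar ∧
        (∀ T' : (⊤ : SimpleGraph V).Subgraph,
          IsInternalSteiner R T' → subWeight w Tstar ≤ subWeight w T') ∧
        ∀ x ∈ Tstar.verts, subDegree Tstar x = 1 → ∃ r ∈ R, Tstar.Adj x r := by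
  intro n
  induction n with
  | zero =>
    intro T hcard hT _
    exfalso
    have hne : T.verts.Nonempty := Set.nonempty_coe_sort.mp hT.1.isConnected.nonempty
    have := (Set.ncard_pos (T.verts.toFinite)).mpr hne
    omega
  | succ n ih =>
    intro T hcard hT hopt
    by_cases hbad : ∃ x ∈ T.verts, subDegree T x = 1 ∧ ¬∃ r ∈ R, T.Adj x r
    · obtain ⟨x, hxv, hdeg, hnr⟩ := hbad
      have hvR : x ∉ R := fun h => by have := hT.2.2 x h; omega
      have htree' := tree_del (v := x) hT.1 hxv hdeg
      have hRsub : R ⊆ (T.deleteVerts {x}).verts := by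
        intro r hr
        simp only [SimpleGraph.Subgraph.deleteVerts_verts, Set.mem_diff,
          Set.mem_singleton_iff]
        refine ⟨hT.2.1 hr, ?_⟩
        rintro rfl; exact hvR hr
      have hdegR : ∀ r ∈ R, 2 ≤ subDegree (T.deleteVerts {x}) r := by
        intro r hr
        have hrx : r ≠ x := by rintro rfl; exact hvR hr
        rw [deg_del hrx (fun h => hnr ⟨r, hr, h⟩)]
        exact hT.2.2 r hr
      have hIS : IsInternalSteiner R (T.deleteVerts {x}) := ⟨htree', hRsub, hdegR⟩
      have hwle : subWeight w (T.deleteVerts {x}) ≤ subWeight w T := weight_del w hm.1 {x}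
      have hcard' : (T.deleteVerts {x}).verts.ncard ≤ n := by
        have heq : (T.deleteVerts {x}).verts = T.verts \ {x} :=
          SimpleGraph.Subgraph.deleteVerts_verts ..
        rw [heq]
        have := Set.ncard_diff_singleton_lt_of_mem hxv (T.verts.toFinite)
        omega
      exact ih (T.deleteVerts {x}) hcard' hIS (fun T' hT' => hwle.trans (hopt T' hT'))
    · push_neg at hbad
      exact ⟨T, hT, hopt, hbad⟩

end Del

/-- There exists an optimal internal Steiner tree in which every leaf is
adjacent to a vertex of R. -/
theorem stmt2 {V : Type*} [Fintype V] (w : V → V → ℝ) (hm : IsMetric w)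
    (R : Set V) (hR : 2 ≤ (Rᶜ : Set V).ncard)
    (T : (⊤ : SimpleGraph V).Subgraph) (hT : IsInternalSteiner R T)
    (hopt : ∀ T' : (⊤ : SimpleGraph V).Subgraph,
      IsInternalSteiner R T' → subWeight w T ≤ subWeight w T') :
    ∃ Tstar : (⊤ : SimpleGraph V).Subgraph, IsInternalSteiner R Tstar ∧
      (∀ T' : (⊤ : SimpleGraph V).Subgraph,
        IsInternalSteiner R T' → subWeight w Tstar ≤ subWeight w T') ∧
      ∀ v ∈ Tstar.verts, subDegree Tstar v = 1 → ∃ r ∈ R, Tstar.Adj v r := by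
  exact main_aux w hm R T.verts.ncard T le_rfl hT hopt
end

section
/- Let G be a metric graph, R ⊆ V(G), and s,t ∈ V \ R. Let T₁ be a tree spanning R in G[V \ {s,t}] with w(T₁) ≤ ρ·w(SMT(G[V\{s,t}], R)). Let u₁, u₂ ∈ V(T₁) be vertices closest to s and t respectively, and T₂ = T₁ ∪ {(s,u₁),(t,u₂)}. If T* is an optimal internal Steiner tree for (G,R) having s and t as leaves, then w(T₂) ≤ ρ·w(T*), where ρ ≥ 1. -/
open SimpleGraph
open scoped Classical

variable {V : Type*}

lemma subWeight_split [Fintype V] {G : SimpleGraph V} (w : V → V → ℝ) (A B C : G.Subgraph)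
    (h : ∀ u v, A.Adj u v ↔ B.Adj u v ∨ C.Adj u v)
    (hd : ∀ u v, ¬(B.Adj u v ∧ C.Adj u v)) :
    subWeight w A = subWeight w B + subWeight w C := by
  unfold subWeight
  rw [← add_div]
  congr 1
  rw [← Finset.sum_add_distrib]
  refine Finset.sum_congr rfl fun u _ => ?_
  rw [← Finset.sum_add_distrib]
  refine Finset.sum_congr rfl fun v _ => ?_
  by_cases hB : B.Adj u v <;> by_cases hC : C.Adj u v
  · exact absurd ⟨hB, hC⟩ (hd u v)
  all_goals simp [h, hB, hC]

lemma subWeight_single [Fintype V] (w : V → V → ℝ) (hsymm : ∀ a b, w a b = w b a)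
    {a b : V} (hab : (⊤ : SimpleGraph V).Adj a b) :
    subWeight w (SimpleGraph.subgraphOfAdj ⊤ hab) = w a b := by
  have hne : a ≠ b := hab.ne
  unfold subWeight
  have : ∀ u v : V, (if (SimpleGraph.subgraphOfAdj ⊤ hab).Adj u v then w u v else 0)
      = (if a = u ∧ b = v then w u v else 0) + (if a = v ∧ b = u then w u v else 0) := by
    intro u v
    rw [subgraphOfAdj_adj, Sym2.eq_iff]
    by_cases h1 : a = u ∧ b = v
    · obtain ⟨rfl, rfl⟩ := h1
      have h2 : ¬(a = b ∧ b = a) := fun h => hne h.1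
      simp [h2]
    · by_cases h2 : a = v ∧ b = u
      · obtain ⟨rfl, rfl⟩ := h2
        have h1' : ¬(a = b ∧ b = a) := fun h => hne h.1
        simp [h1']
      · simp [h1, h2]
  simp only [this, Finset.sum_add_distrib]
  have e1 : (∑ u, ∑ v, if a = u ∧ b = v then w u v else 0) = w a b := by
    simp [Finset.sum_ite_eq, ite_and]
  have e2 : (∑ u, ∑ v, if a = v ∧ b = u then w u v else 0) = w b a := by
    simp [Finset.sum_ite_eq, ite_and]
  rw [e1, e2, hsymm b a]
  ring

lemma path_no_internal {W : Type*} {G : SimpleGraph W} {a b x n : W} (p : G.Walk a b)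
    (hp : p.IsPath) (hx : x ∈ p.support) (hxa : x ≠ a) (hxb : x ≠ b)
    (hn : ∀ y, G.Adj x y → y = n) : False := by
  have hspec := p.take_spec hx
  set p₁ := p.takeUntil x hx with hp₁
  set p₂ := p.dropUntil x hx with hp₂
  have hnodup : (p₁.append p₂).edges.Nodup := by rw [hspec]; exact hp.edges_nodup
  rw [SimpleGraph.Walk.edges_append, List.nodup_append] at hnodup
  have h1nil : ¬ p₁.reverse.Nil := SimpleGraph.Walk.not_nil_of_ne hxa
  have h2nil : ¬ p₂.Nil := SimpleGraph.Walk.not_nil_of_ne hxb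
  obtain ⟨y₁, hadj₁, q₁, hq₁⟩ := SimpleGraph.Walk.not_nil_iff.mp h1nil
  obtain ⟨y₂, hadj₂, q₂, hq₂⟩ := SimpleGraph.Walk.not_nil_iff.mp h2nil
  have he₁ : s(x, y₁) ∈ p₁.edges := by
    have : s(x, y₁) ∈ p₁.reverse.edges := by rw [hq₁]; simp
    rwa [SimpleGraph.Walk.edges_reverse, List.mem_reverse] at this
  have he₂ : s(x, y₂) ∈ p₂.edges := by rw [hq₂]; simp
  rw [hn y₁ hadj₁] at he₁
  rw [hn y₂ hadj₂] at he₂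
  exact hnodup.2.2 _ he₁ _ he₂ rfl

lemma reach_delete {G : SimpleGraph V} {H : G.Subgraph} {S : Set V} :
    ∀ {x y : H.verts} (p : H.coe.Walk x y), (∀ v ∈ p.support, (v : V) ∉ S) →
    ∀ (hx : (x : V) ∈ (H.deleteVerts S).verts) (hy : (y : V) ∈ (H.deleteVerts S).verts),
    (H.deleteVerts S).coe.Reachable ⟨x, hx⟩ ⟨y, hy⟩ := by
  intro x y p
  induction p with
  | nil => intro _ hx hy; rfl
  | @cons u z y h q ih =>
    intro hsup hx hy
    have hz : (z : V) ∉ S := hsup z (by simp)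
    have hz' : (z : V) ∈ (H.deleteVerts S).verts := by
      rw [SimpleGraph.Subgraph.deleteVerts_verts]
      exact ⟨z.2, hz⟩
    have hadj : (H.deleteVerts S).coe.Adj ⟨u, hx⟩ ⟨z, hz'⟩ := by
      simp only [SimpleGraph.Subgraph.coe_adj, SimpleGraph.Subgraph.deleteVerts_adj]
      refine ⟨u.2, ?_, z.2, hz, h⟩
      · rw [SimpleGraph.Subgraph.deleteVerts_verts] at hx
        exact hx.2
    exact hadj.reachable.trans (ih (fun v hv => hsup v (by simp [hv])) hz' hy)

lemma deleteVerts_isTree {G : SimpleGraph V} {H : G.Subgraph} (hH : H.coe.IsTree)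
    {s t ps pt : V} (hs : s ∈ H.verts) (ht : t ∈ H.verts)
    (hsu : ∀ y, H.Adj s y → y = ps) (htu : ∀ y, H.Adj t y → y = pt)
    (hpsv : ps ∈ H.verts) (hptv : pt ∈ H.verts) (hpss : ps ≠ s) (hpst : ps ≠ t) :
    (H.deleteVerts {s, t}).coe.IsTree := by
  have hpsd : ps ∈ (H.deleteVerts {s, t}).verts := by
    rw [SimpleGraph.Subgraph.deleteVerts_verts]
    exact ⟨hpsv, by simp [hpss, hpst]⟩
  constructor
  · -- connected
    rw [SimpleGraph.connected_iff]
    refine ⟨?_, ⟨⟨ps, hpsd⟩⟩⟩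
    rintro ⟨x, hx⟩ ⟨y, hy⟩
    rw [SimpleGraph.Subgraph.deleteVerts_verts] at hx hy
    obtain ⟨hxv, hxS⟩ := hx
    obtain ⟨hyv, hyS⟩ := hy
    obtain ⟨p0⟩ := hH.isConnected.preconnected ⟨x, hxv⟩ ⟨y, hyv⟩
    let p := p0.toPath
    have hxs : x ≠ s := fun h => hxS (by simp [h])
    have hxt : x ≠ t := fun h => hxS (by simp [h])
    have hys : y ≠ s := fun h => hyS (by simp [h])
    have hyt : y ≠ t := fun h => hyS (by simp [h])
    have havoid : ∀ v ∈ p.1.support, (v : V) ∉ ({s, t} : Set V) := by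
      intro v hv hvS
      rcases hvS with hvs | hvt
      · have hveq : v = ⟨s, hs⟩ := Subtype.ext hvs
        rw [hveq] at hv
        refine path_no_internal p.1 p.2 hv
          (fun h => hxs (congrArg Subtype.val h).symm)
          (fun h => hys (congrArg Subtype.val h).symm)
          (n := ⟨ps, hpsv⟩) ?_
        intro z hz
        exact Subtype.ext (hsu z (by exact hz))
      · have hveq : v = ⟨t, ht⟩ := Subtype.ext hvt
        rw [hveq] at hv
        refine path_no_internal p.1 p.2 hv
          (fun h => hxt (congrArg Subtype.val h).symm)
          (fun h => hyt (congrArg Subtype.val h).symm)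
          (n := ⟨pt, hptv⟩) ?_
        intro z hz
        exact Subtype.ext (htu z (by exact hz))
    have := reach_delete p.1 havoid
      (by rw [SimpleGraph.Subgraph.deleteVerts_verts]; exact ⟨hxv, hxS⟩)
      (by rw [SimpleGraph.Subgraph.deleteVerts_verts]; exact ⟨hyv, hyS⟩)
    exact this
  · -- acyclic
    intro v c hc
    have hinj : Function.Injective (SimpleGraph.Subgraph.inclusion
        (SimpleGraph.Subgraph.deleteVerts_le (s := {s, t}) (G' := H))) := by
      intro a b hab
      have h' := congrArg Subtype.val hab
      exact Subtype.ext h'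
    exact hH.IsAcyclic _ (hc.map hinj)

/-- Attaching s and t to a ρ-approximate Steiner tree T₁ of G[V\{s,t}] via
their closest vertices gives a tree T₂ with w(T₂) ≤ ρ·w(T*), where T* is an
optimal internal Steiner tree having s, t as leaves (with pendant edges of
minimum weight to R). -/
theorem stmt8 {V : Type*} [Fintype V] (w : V → V → ℝ) (hm : IsMetric w)
    (R : Set V) (s t : V) (hst : s ≠ t) (hsR : s ∉ R) (htR : t ∉ R)
    (ρ : ℝ) (hρ : 1 ≤ ρ)
    (T₁ : (⊤ : SimpleGraph V).Subgraph) (hT₁tree : IsTreeSub T₁)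
    (hT₁span : R ⊆ T₁.verts) (hT₁s : s ∉ T₁.verts) (hT₁t : t ∉ T₁.verts)
    (hT₁apx : ∀ T' : (⊤ : SimpleGraph V).Subgraph, IsTreeSub T' → R ⊆ T'.verts →
      s ∉ T'.verts → t ∉ T'.verts → subWeight w T₁ ≤ ρ * subWeight w T')
    (u₁ u₂ : V) (hu₁ : u₁ ∈ T₁.verts) (hu₂ : u₂ ∈ T₁.verts)
    (hu₁min : ∀ x ∈ T₁.verts, w s u₁ ≤ w s x)
    (hu₂min : ∀ x ∈ T₁.verts, w t u₂ ≤ w t x)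
    (hadj₁ : (⊤ : SimpleGraph V).Adj s u₁) (hadj₂ : (⊤ : SimpleGraph V).Adj t u₂)
    (Tstar : (⊤ : SimpleGraph V).Subgraph) (hTstar : IsInternalSteiner R Tstar)
    (hopt : ∀ T' : (⊤ : SimpleGraph V).Subgraph,
      IsInternalSteiner R T' → subWeight w Tstar ≤ subWeight w T')
    (hs : s ∈ Tstar.verts) (hsleaf : subDegree Tstar s = 1)
    (ht : t ∈ Tstar.verts) (htleaf : subDegree Tstar t = 1)
    (ps pt : V) (hps : Tstar.Adj s ps) (hpsR : ps ∈ R)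
    (hpsmin : ∀ r ∈ R, w s ps ≤ w s r)
    (hpt : Tstar.Adj t pt) (hptR : pt ∈ R)
    (hptmin : ∀ r ∈ R, w t pt ≤ w t r) :
    subWeight w (T₁ ⊔ SimpleGraph.subgraphOfAdj ⊤ hadj₁ ⊔ SimpleGraph.subgraphOfAdj ⊤ hadj₂)
      ≤ ρ * subWeight w Tstar := by
  obtain ⟨hw0, hwsym, -⟩ := hm
  -- uniqueness of the neighbors of the leaves s and t
  have hsu : ∀ x, Tstar.Adj s x → x = ps := by
    intro x hx
    have hcard : (Finset.univ.filter (fun u => Tstar.Adj s u)).card ≤ 1 := by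
      unfold subDegree at hsleaf; omega
    exact Finset.card_le_one.mp hcard _ (by simp [hx]) _ (by simp [hps])
  have htu : ∀ x, Tstar.Adj t x → x = pt := by
    intro x hx
    have hcard : (Finset.univ.filter (fun u => Tstar.Adj t u)).card ≤ 1 := by
      unfold subDegree at htleaf; omega
    exact Finset.card_le_one.mp hcard _ (by simp [hx]) _ (by simp [hpt])
  have hpss : ps ≠ s := fun h => hsR (h ▸ hpsR)
  have hpstne : ps ≠ t := fun h => htR (h ▸ hpsR)
  have hpts : pt ≠ s := fun h => hsR (h ▸ hptR)
  have hptt : pt ≠ t := fun h => htR (h ▸ hptR)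
  -- the tree obtained from Tstar by deleting the two leaves s, t
  set Tm : (⊤ : SimpleGraph V).Subgraph := Tstar.deleteVerts {s, t} with hTmdef
  have hTmTree : IsTreeSub Tm :=
    deleteVerts_isTree hTstar.1 hs ht hsu htu hps.snd_mem hpt.snd_mem hpss hpstne
  have hRTm : R ⊆ Tm.verts := by
    intro r hr
    rw [hTmdef, SimpleGraph.Subgraph.deleteVerts_verts]
    refine ⟨hTstar.2.1 hr, ?_⟩
    intro hmem
    rcases hmem with h | h
    · exact hsR (h ▸ hr)
    · exact htR (h ▸ hr)
  have hsTm : s ∉ Tm.verts := by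
    rw [hTmdef, SimpleGraph.Subgraph.deleteVerts_verts]
    exact fun h => h.2 (by simp)
  have htTm : t ∉ Tm.verts := by
    rw [hTmdef, SimpleGraph.Subgraph.deleteVerts_verts]
    exact fun h => h.2 (by simp)
  have happ : subWeight w T₁ ≤ ρ * subWeight w Tm := hT₁apx Tm hTmTree hRTm hsTm htTm
  -- edges from s, t to their neighbors in Tstar
  have hsps : (⊤ : SimpleGraph V).Adj s ps := by rw [top_adj]; exact Ne.symm hpss
  have htpt : (⊤ : SimpleGraph V).Adj t pt := by rw [top_adj]; exact Ne.symm hptt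
  set E1 : (⊤ : SimpleGraph V).Subgraph := SimpleGraph.subgraphOfAdj ⊤ hsps with hE1
  set E2 : (⊤ : SimpleGraph V).Subgraph := SimpleGraph.subgraphOfAdj ⊤ htpt with hE2
  -- decomposition of the weight of Tstar
  have hiff : ∀ u v, Tstar.Adj u v ↔ Tm.Adj u v ∨ (E1 ⊔ E2).Adj u v := by
    intro u v
    constructor
    · intro h
      by_cases hus : u = s
      · subst hus
        have := hsu v h; subst this
        exact Or.inr (Or.inl (by simp [hE1]))
      · by_cases hvs : v = s
        · subst hvs
          have := hsu u h.symm; subst this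
          refine Or.inr (Or.inl ?_)
          rw [hE1, subgraphOfAdj_adj]
          exact Sym2.eq_swap
        · by_cases hut : u = t
          · subst hut
            have := htu v h; subst this
            exact Or.inr (Or.inr (by simp [hE2]))
          · by_cases hvt : v = t
            · subst hvt
              have := htu u h.symm; subst this
              refine Or.inr (Or.inr ?_)
              rw [hE2, subgraphOfAdj_adj]
              exact Sym2.eq_swap
            · refine Or.inl ?_
              rw [hTmdef, SimpleGraph.Subgraph.deleteVerts_adj]
              exact ⟨h.fst_mem, by simp [hus, hut], h.snd_mem, by simp [hvs, hvt], h⟩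
    · rintro (h | h)
      · exact SimpleGraph.Subgraph.deleteVerts_le.2 h
      · rcases h with h | h
        · rw [hE1, subgraphOfAdj_adj, Sym2.eq_iff] at h
          rcases h with ⟨rfl, rfl⟩ | ⟨rfl, rfl⟩
          · exact hps
          · exact hps.symm
        · rw [hE2, subgraphOfAdj_adj, Sym2.eq_iff] at h
          rcases h with ⟨rfl, rfl⟩ | ⟨rfl, rfl⟩
          · exact hpt
          · exact hpt.symm
  have hdisj : ∀ u v, ¬(Tm.Adj u v ∧ (E1 ⊔ E2).Adj u v) := by
    rintro u v ⟨h1, h2⟩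
    rw [hTmdef, SimpleGraph.Subgraph.deleteVerts_adj] at h1
    rcases h2 with h | h
    · rw [hE1, subgraphOfAdj_adj, Sym2.eq_iff] at h
      rcases h with ⟨h, -⟩ | ⟨h, -⟩
      · exact h1.2.1 (h ▸ (by simp : s ∈ ({s, t} : Set V)))
      · exact h1.2.2.2.1 (h ▸ (by simp : s ∈ ({s, t} : Set V)))
    · rw [hE2, subgraphOfAdj_adj, Sym2.eq_iff] at h
      rcases h with ⟨h, -⟩ | ⟨h, -⟩
      · exact h1.2.1 (h ▸ (by simp : t ∈ ({s, t} : Set V)))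
      · exact h1.2.2.2.1 (h ▸ (by simp : t ∈ ({s, t} : Set V)))
  have hdisjE : ∀ u v, ¬(E1.Adj u v ∧ E2.Adj u v) := by
    rintro u v ⟨h1, h2⟩
    rw [hE1, subgraphOfAdj_adj] at h1
    rw [hE2, subgraphOfAdj_adj] at h2
    have h := h1.trans h2.symm
    rw [Sym2.eq_iff] at h
    rcases h with ⟨h, -⟩ | ⟨h, -⟩
    · exact hst h
    · exact hsR (h ▸ hptR)
  have hTdec : subWeight w Tstar = subWeight w Tm + (w s ps + w t pt) := by
    rw [subWeight_split w Tstar Tm (E1 ⊔ E2) hiff hdisj,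
      subWeight_split w (E1 ⊔ E2) E1 E2 (fun u v => Iff.rfl) hdisjE,
      hE1, hE2, subWeight_single w hwsym hsps, subWeight_single w hwsym htpt]
  -- decomposition of the weight of T₂
  set F1 : (⊤ : SimpleGraph V).Subgraph := SimpleGraph.subgraphOfAdj ⊤ hadj₁ with hF1
  set F2 : (⊤ : SimpleGraph V).Subgraph := SimpleGraph.subgraphOfAdj ⊤ hadj₂ with hF2
  have hdisjF : ∀ u v, ¬(F1.Adj u v ∧ F2.Adj u v) := by
    rintro u v ⟨h1, h2⟩
    rw [hF1, subgraphOfAdj_adj] at h1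
    rw [hF2, subgraphOfAdj_adj] at h2
    have h := h1.trans h2.symm
    rw [Sym2.eq_iff] at h
    rcases h with ⟨h, -⟩ | ⟨h, -⟩
    · exact hst h
    · exact hT₁s (h ▸ hu₂)
  have hdisjT : ∀ u v, ¬(T₁.Adj u v ∧ (F1 ⊔ F2).Adj u v) := by
    rintro u v ⟨h1, h2⟩
    rcases h2 with h | h
    · rw [hF1, subgraphOfAdj_adj, Sym2.eq_iff] at h
      rcases h with ⟨h, -⟩ | ⟨h, -⟩
      · exact hT₁s (h ▸ h1.fst_mem)
      · exact hT₁s (h ▸ h1.snd_mem)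
    · rw [hF2, subgraphOfAdj_adj, Sym2.eq_iff] at h
      rcases h with ⟨h, -⟩ | ⟨h, -⟩
      · exact hT₁t (h ▸ h1.fst_mem)
      · exact hT₁t (h ▸ h1.snd_mem)
  have hT2dec : subWeight w (T₁ ⊔ F1 ⊔ F2) = subWeight w T₁ + (w s u₁ + w t u₂) := by
    rw [subWeight_split w (T₁ ⊔ F1 ⊔ F2) T₁ (F1 ⊔ F2)
        (fun u v => by simp [SimpleGraph.Subgraph.sup_adj, or_assoc]) hdisjT,
      subWeight_split w (F1 ⊔ F2) F1 F2 (fun u v => Iff.rfl) hdisjF,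
      hF1, hF2, subWeight_single w hwsym hadj₁, subWeight_single w hwsym hadj₂]
  rw [hT2dec, hTdec]
  have h1 : w s u₁ ≤ w s ps := hu₁min ps (hT₁span hpsR)
  have h2 : w t u₂ ≤ w t pt := hu₂min pt (hT₁span hptR)
  nlinarith [hw0 s ps, hw0 t pt, mul_nonneg (sub_nonneg.mpr hρ) (hw0 s ps),
    mul_nonneg (sub_nonneg.mpr hρ) (hw0 t pt)]
end
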